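/- If g is a complex one-loop fixed point on ℂ^N and g is not identically zero, then ‖g‖ ≥ 1/5. -/

import Mathlib

/-- `(g ♭ h)_{ijkl} = ∑_{m,n} g_{ijmn} h_{mnkl}`. -/
noncomputable def cflat {N : ℕ} (g h : Fin N → Fin N → Fin N → Fin N → ℂ) :
    Fin N → Fin N → Fin N → Fin N → ℂ :=
  fun i j k l => ∑ m : Fin N, ∑ n : Fin N, g i j m n * h m n k l

/-- `(g ♯ h)_{ijkl} = ∑_{m,n} g_{imkn} h_{jnlm}`. -/
noncomputable def csharp {N : ℕ} (g h : Fin N → Fin N → Fin N → Fin N → ℂ) :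
    Fin N → Fin N → Fin N → Fin N → ℂ :=
  fun i j k l => ∑ m : Fin N, ∑ n : Fin N, g i m k n * h j n l m

/-- `P(A)_{ijkl} = (A_{ijkl} + A_{jikl} + A_{ijlk} + A_{jilk})/4`. -/
noncomputable def cP {N : ℕ} (A : Fin N → Fin N → Fin N → Fin N → ℂ) :
    Fin N → Fin N → Fin N → Fin N → ℂ :=
  fun i j k l => (A i j k l + A j i k l + A i j l k + A j i l k) / 4

/-- `‖g‖² = ∑_{i,j,k,l} |g_{ijkl}|²`. -/
noncomputable def csqnorm {N : ℕ} (g : Fin N → Fin N → Fin N → Fin N → ℂ) : ℝ :=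
  ∑ i : Fin N, ∑ j : Fin N, ∑ k : Fin N, ∑ l : Fin N, ‖g i j k l‖ ^ 2

/-- A complex quartic coupling on `ℂ^N`: symmetric under `i ↔ j` and `k ↔ l`,
and satisfying the reality condition `conj g_{ijkl} = g_{klij}`. -/
def IsCplxCoupling {N : ℕ} (g : Fin N → Fin N → Fin N → Fin N → ℂ) : Prop :=
  (∀ i j k l, g i j k l = g j i k l) ∧ (∀ i j k l, g i j k l = g i j l k) ∧
    (∀ i j k l, (starRingEnd ℂ) (g i j k l) = g k l i j)

/-- The complex one-loop fixed point equation `g = P(g ♭ g + 4 g ♯ g)`. -/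
def IsCplxFixedPoint {N : ℕ} (g : Fin N → Fin N → Fin N → Fin N → ℂ) : Prop :=
  IsCplxCoupling g ∧
    ∀ i j k l, g i j k l =
      cP (fun a b c d => cflat g g a b c d + 4 * csharp g g a b c d) i j k l

open Finset

/-- Embed a quartic tensor into Euclidean space. -/
noncomputable def cvec {N : ℕ} (g : Fin N → Fin N → Fin N → Fin N → ℂ) :
    EuclideanSpace ℂ (Fin N × Fin N × Fin N × Fin N) :=
  WithLp.toLp 2 (fun p : Fin N × Fin N × Fin N × Fin N => g p.1 p.2.1 p.2.2.1 p.2.2.2)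

lemma csqnorm_eq {N : ℕ} (g : Fin N → Fin N → Fin N → Fin N → ℂ) :
    csqnorm g = ‖cvec g‖ ^ 2 := by
  rw [EuclideanSpace.norm_eq, Real.sq_sqrt (by positivity)]
  simp [csqnorm, cvec, Fintype.sum_prod_type]

/-- Coordinate permutation of a Euclidean vector. -/
noncomputable def permv {I : Type*} [Fintype I] (e : I ≃ I) (x : EuclideanSpace ℂ I) :
    EuclideanSpace ℂ I :=
  (LinearIsometryEquiv.piLpCongrLeft 2 ℂ ℂ e.symm) x

lemma permv_apply {I : Type*} [Fintype I] (e : I ≃ I) (x : EuclideanSpace ℂ I) (p : I) :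
    permv e x p = x (e p) := by
  simp [permv, LinearIsometryEquiv.piLpCongrLeft_apply, Equiv.piCongrLeft']

lemma permv_norm {I : Type*} [Fintype I] (e : I ≃ I) (x : EuclideanSpace ℂ I) :
    ‖permv e x‖ = ‖x‖ :=
  (LinearIsometryEquiv.piLpCongrLeft 2 ℂ ℂ e.symm).norm_map x

lemma sum4_perm {N : ℕ} (f : Fin N → Fin N → Fin N → Fin N → ℝ)
    (σ : (Fin N × Fin N × Fin N × Fin N) ≃ (Fin N × Fin N × Fin N × Fin N)) :
    (∑ i : Fin N, ∑ j : Fin N, ∑ k : Fin N, ∑ l : Fin N,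
      f (σ (i,j,k,l)).1 (σ (i,j,k,l)).2.1 (σ (i,j,k,l)).2.2.1 (σ (i,j,k,l)).2.2.2)
    = ∑ i : Fin N, ∑ j : Fin N, ∑ k : Fin N, ∑ l : Fin N, f i j k l := by
  have h := Equiv.sum_comp σ (fun p : Fin N × Fin N × Fin N × Fin N =>
    f p.1 p.2.1 p.2.2.1 p.2.2.2)
  simpa [Fintype.sum_prod_type] using h

lemma sum_mul_sum4 {N : ℕ} (X Y : Fin N → Fin N → ℝ) :
    ∑ i : Fin N, ∑ j : Fin N, ∑ k : Fin N, ∑ l : Fin N, X i j * Y k l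
      = (∑ i : Fin N, ∑ j : Fin N, X i j) * (∑ k : Fin N, ∑ l : Fin N, Y k l) := by
  simp only [← Finset.mul_sum, ← Finset.sum_mul]

lemma norm_cvec_cP_le {N : ℕ} (A : Fin N → Fin N → Fin N → Fin N → ℂ) :
    ‖cvec (cP A)‖ ≤ ‖cvec A‖ := by
  let e1 : (Fin N × Fin N × Fin N × Fin N) ≃ (Fin N × Fin N × Fin N × Fin N) :=
    ⟨fun p => (p.2.1, p.1, p.2.2), fun p => (p.2.1, p.1, p.2.2), fun p => rfl, fun p => rfl⟩
  let e2 : (Fin N × Fin N × Fin N × Fin N) ≃ (Fin N × Fin N × Fin N × Fin N) :=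
    ⟨fun p => (p.1, p.2.1, p.2.2.2, p.2.2.1), fun p => (p.1, p.2.1, p.2.2.2, p.2.2.1),
      fun p => rfl, fun p => rfl⟩
  let e3 := e1.trans e2
  have h : cvec (cP A) =
      (4 : ℂ)⁻¹ • (cvec A + permv e1 (cvec A) + permv e2 (cvec A) + permv e3 (cvec A)) := by
    ext p
    simp only [PiLp.smul_apply, PiLp.add_apply, permv_apply, smul_eq_mul]
    show cP A p.1 p.2.1 p.2.2.1 p.2.2.2 = _
    simp only [cP, cvec, e1, e2, e3, Equiv.trans_apply, Equiv.coe_fn_mk]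
    ring
  rw [h, norm_smul]
  have h4 : ‖(4 : ℂ)⁻¹‖ = 4⁻¹ := by simp
  rw [h4]
  have := norm_add_le (cvec A + permv e1 (cvec A) + permv e2 (cvec A)) (permv e3 (cvec A))
  have h2 := norm_add_le (cvec A + permv e1 (cvec A)) (permv e2 (cvec A))
  have h3 := norm_add_le (cvec A) (permv e1 (cvec A))
  simp only [permv_norm] at this h2 h3
  nlinarith [norm_nonneg (cvec A)]

lemma csqnorm_cflat_le {N : ℕ} (g : Fin N → Fin N → Fin N → Fin N → ℂ) :
    csqnorm (cflat g g) ≤ (csqnorm g) ^ 2 := by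
  classical
  set a : Fin N → Fin N → Fin N → Fin N → ℝ := fun i j k l => ‖g i j k l‖ ^ 2
    with ha
  have key : ∀ i j k l : Fin N, ‖cflat g g i j k l‖ ^ 2 ≤
      (∑ r : Fin N × Fin N, a i j r.1 r.2) * (∑ r : Fin N × Fin N, a r.1 r.2 k l) := by
    intro i j k l
    have h1 : ‖cflat g g i j k l‖ ≤
        ∑ r : Fin N × Fin N, ‖g i j r.1 r.2‖ * ‖g r.1 r.2 k l‖ := by
      have : cflat g g i j k l = ∑ r : Fin N × Fin N, g i j r.1 r.2 * g r.1 r.2 k l :=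
        (Fintype.sum_prod_type' (f := fun m n => g i j m n * g m n k l)).symm
      rw [this]
      refine (norm_sum_le _ _).trans ?_
      exact le_of_eq (Finset.sum_congr rfl fun r _ => norm_mul _ _)
    have h2 := Finset.sum_mul_sq_le_sq_mul_sq Finset.univ
      (fun r : Fin N × Fin N => ‖g i j r.1 r.2‖)
      (fun r : Fin N × Fin N => ‖g r.1 r.2 k l‖)
    calc ‖cflat g g i j k l‖ ^ 2
        ≤ (∑ r : Fin N × Fin N, ‖g i j r.1 r.2‖ * ‖g r.1 r.2 k l‖) ^ 2 :=
          pow_le_pow_left₀ (norm_nonneg _) h1 2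
      _ ≤ _ := h2
  have hsum : csqnorm (cflat g g) ≤
      ∑ i : Fin N, ∑ j : Fin N, ∑ k : Fin N, ∑ l : Fin N,
        (∑ r : Fin N × Fin N, a i j r.1 r.2) * (∑ r : Fin N × Fin N, a r.1 r.2 k l) := by
    unfold csqnorm
    refine Finset.sum_le_sum fun i _ => Finset.sum_le_sum fun j _ =>
      Finset.sum_le_sum fun k _ => Finset.sum_le_sum fun l _ => key i j k l
  refine hsum.trans (le_of_eq ?_)
  rw [sum_mul_sum4 (fun i j => ∑ r : Fin N × Fin N, a i j r.1 r.2)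
    (fun k l => ∑ r : Fin N × Fin N, a r.1 r.2 k l)]
  have hl : (∑ i : Fin N, ∑ j : Fin N, ∑ r : Fin N × Fin N, a i j r.1 r.2) = csqnorm g := by
    simp [csqnorm, ha, Fintype.sum_prod_type]
  have hr : (∑ k : Fin N, ∑ l : Fin N, ∑ r : Fin N × Fin N, a r.1 r.2 k l) = csqnorm g := by
    simp only [Fintype.sum_prod_type]
    exact sum4_perm (fun i j k l => ‖g i j k l‖ ^ 2)
      ⟨fun p => (p.2.2.1, p.2.2.2, p.1, p.2.1), fun p => (p.2.2.1, p.2.2.2, p.1, p.2.1),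
        fun p => rfl, fun p => rfl⟩
  rw [hl, hr, sq]

lemma csqnorm_csharp_le {N : ℕ} (g : Fin N → Fin N → Fin N → Fin N → ℂ) :
    csqnorm (csharp g g) ≤ (csqnorm g) ^ 2 := by
  classical
  set a : Fin N → Fin N → Fin N → Fin N → ℝ := fun i j k l => ‖g i j k l‖ ^ 2
    with ha
  set F : Fin N → Fin N → ℝ := fun i k => ∑ r : Fin N × Fin N, a i r.1 k r.2 with hF
  set G : Fin N → Fin N → ℝ := fun j l => ∑ r : Fin N × Fin N, a j r.2 l r.1 with hG
  have key : ∀ i j k l : Fin N, ‖csharp g g i j k l‖ ^ 2 ≤ F i k * G j l := by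
    intro i j k l
    have h1 : ‖csharp g g i j k l‖ ≤
        ∑ r : Fin N × Fin N, ‖g i r.1 k r.2‖ * ‖g j r.2 l r.1‖ := by
      have : csharp g g i j k l = ∑ r : Fin N × Fin N, g i r.1 k r.2 * g j r.2 l r.1 :=
        (Fintype.sum_prod_type' (f := fun m n => g i m k n * g j n l m)).symm
      rw [this]
      refine (norm_sum_le _ _).trans ?_
      exact le_of_eq (Finset.sum_congr rfl fun r _ => norm_mul _ _)
    have h2 := Finset.sum_mul_sq_le_sq_mul_sq Finset.univ
      (fun r : Fin N × Fin N => ‖g i r.1 k r.2‖)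
      (fun r : Fin N × Fin N => ‖g j r.2 l r.1‖)
    calc ‖csharp g g i j k l‖ ^ 2
        ≤ (∑ r : Fin N × Fin N, ‖g i r.1 k r.2‖ * ‖g j r.2 l r.1‖) ^ 2 :=
          pow_le_pow_left₀ (norm_nonneg _) h1 2
      _ ≤ _ := h2
  have hsum : csqnorm (csharp g g) ≤
      ∑ i : Fin N, ∑ j : Fin N, ∑ k : Fin N, ∑ l : Fin N, F i k * G j l := by
    unfold csqnorm
    refine Finset.sum_le_sum fun i _ => Finset.sum_le_sum fun j _ =>
      Finset.sum_le_sum fun k _ => Finset.sum_le_sum fun l _ => key i j k l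
  refine hsum.trans (le_of_eq ?_)
  have step : ∑ i : Fin N, ∑ j : Fin N, ∑ k : Fin N, ∑ l : Fin N, F i k * G j l
      = (∑ i : Fin N, ∑ k : Fin N, F i k) * (∑ j : Fin N, ∑ l : Fin N, G j l) := by
    calc ∑ i : Fin N, ∑ j : Fin N, ∑ k : Fin N, ∑ l : Fin N, F i k * G j l
        = ∑ i : Fin N, ∑ k : Fin N, ∑ j : Fin N, ∑ l : Fin N, F i k * G j l :=
          Finset.sum_congr rfl fun i _ => Finset.sum_comm
      _ = _ := sum_mul_sum4 F G
  rw [step]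
  have hl : (∑ i : Fin N, ∑ k : Fin N, F i k) = csqnorm g := by
    simp only [hF, Fintype.sum_prod_type]
    exact sum4_perm (fun i j k l => ‖g i j k l‖ ^ 2)
      ⟨fun p => (p.1, p.2.2.1, p.2.1, p.2.2.2), fun p => (p.1, p.2.2.1, p.2.1, p.2.2.2),
        fun p => rfl, fun p => rfl⟩
  have hr : (∑ j : Fin N, ∑ l : Fin N, G j l) = csqnorm g := by
    simp only [hG, Fintype.sum_prod_type]
    exact sum4_perm (fun i j k l => ‖g i j k l‖ ^ 2)
      ⟨fun p => (p.1, p.2.2.2, p.2.1, p.2.2.1), fun p => (p.1, p.2.2.1, p.2.2.2, p.2.1),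
        fun p => rfl, fun p => rfl⟩
  rw [hl, hr, sq]

/-- any nonzero complex one-loop fixed point has `‖g‖ ≥ 1/5`. -/
theorem cplxFixedPoint_norm_lower_bound {N : ℕ} (hN : 1 ≤ N)
    (g : Fin N → Fin N → Fin N → Fin N → ℂ) (hfp : IsCplxFixedPoint g)
    (hne : g ≠ 0) :
    (1 : ℝ) / 5 ≤ Real.sqrt (csqnorm g) := by
  obtain ⟨-, hfix⟩ := hfp
  set A : Fin N → Fin N → Fin N → Fin N → ℂ :=
    fun a b c d => cflat g g a b c d + 4 * csharp g g a b c d with hA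
  set t := ‖cvec g‖ with ht
  have htpos : 0 < t := by
    rw [ht, norm_pos_iff]
    intro h0
    apply hne
    funext i j k l
    have := congrArg (fun v : EuclideanSpace ℂ (Fin N × Fin N × Fin N × Fin N) => v (i, j, k, l)) h0
    simpa [cvec] using this
  have hS : csqnorm g = t ^ 2 := csqnorm_eq g
  have hgoal : Real.sqrt (csqnorm g) = t := by
    rw [hS, Real.sqrt_sq htpos.le]
  rw [hgoal]
  have hflat : ‖cvec (cflat g g)‖ ≤ t ^ 2 := by
    have h1 := csqnorm_cflat_le g
    rw [csqnorm_eq (cflat g g), hS] at h1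
    nlinarith [norm_nonneg (cvec (cflat g g)), sq_nonneg t]
  have hsharp : ‖cvec (csharp g g)‖ ≤ t ^ 2 := by
    have h1 := csqnorm_csharp_le g
    rw [csqnorm_eq (csharp g g), hS] at h1
    nlinarith [norm_nonneg (cvec (csharp g g)), sq_nonneg t]
  have hchain : t ≤ 5 * t ^ 2 := by
    have hgv : cvec g = cvec (cP A) := by
      ext p
      exact hfix p.1 p.2.1 p.2.2.1 p.2.2.2
    have hsplit : cvec A = cvec (cflat g g) + (4 : ℂ) • cvec (csharp g g) := by
      ext p
      simp only [PiLp.add_apply, PiLp.smul_apply, smul_eq_mul]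
      show A p.1 p.2.1 p.2.2.1 p.2.2.2 = _
      simp [hA, cvec]
    calc t = ‖cvec (cP A)‖ := by rw [ht, hgv]
      _ ≤ ‖cvec A‖ := norm_cvec_cP_le A
      _ ≤ ‖cvec (cflat g g)‖ + ‖(4 : ℂ) • cvec (csharp g g)‖ := by
          rw [hsplit]; exact norm_add_le _ _
      _ ≤ t ^ 2 + 4 * t ^ 2 := by
          rw [norm_smul]
          have : ‖(4 : ℂ)‖ = 4 := by simp
          rw [this]
          have := hsharp
          nlinarith [norm_nonneg (cvec (csharp g g))]
      _ = 5 * t ^ 2 := by ring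
  nlinarith
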